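/- The involution numbers cd(n) satisfy the asymptotic n-th root growth: cd(n)^{1/n} / sqrt(n) converges to 1/sqrt(e) as n tends to infinity. -/

import Mathlib

open Filter Equiv Equiv.Perm

/-- `cd n` is the number of involutions in the symmetric group on `n` letters (OEIS A000085). -/
noncomputable def cd (n : ℕ) : ℕ :=
  Nat.card {g : Equiv.Perm (Fin n) // g ^ 2 = 1}

lemma permCongr_sq_one_iff {α β : Type*} (e : α ≃ β) (g : Perm α) :
    (e.permCongr g) ^ 2 = 1 ↔ g ^ 2 = 1 := by
  have h : (e.permCongr g) ^ 2 = e.permCongr (g ^ 2) := by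
    ext x; simp [sq, Equiv.Perm.mul_apply]
  have h1 : e.permCongr (1 : Perm α) = 1 := by
    ext x; simp
  rw [h]
  constructor
  · intro hh
    have := e.permCongr.injective (a₁ := g ^ 2) (a₂ := 1) (by rw [hh, h1])
    exact this
  · intro hh; rw [hh, h1]

lemma card_inv (α : Type*) [Fintype α] :
    Nat.card {g : Equiv.Perm α // g ^ 2 = 1} = cd (Fintype.card α) := by
  rw [cd]
  exact Nat.card_congr
    (Equiv.subtypeEquiv (Equiv.permCongr (Fintype.equivFin α))
      (fun g => (permCongr_sq_one_iff _ g).symm))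

lemma cd_zero : cd 0 = 1 := by
  rw [cd, Nat.card_eq_fintype_card]; decide

lemma cd_one : cd 1 = 1 := by
  rw [cd, Nat.card_eq_fintype_card]; decide

lemma inv_apply_sq {β : Type*} {g : Perm β} (h2 : g ^ 2 = 1) (x : β) : g (g x) = x := by
  simpa [sq, Equiv.Perm.mul_apply] using Equiv.ext_iff.mp h2 x

lemma subtypePerm_sq {β : Type*} {g : Perm β} {p : β → Prop} (h2 : g ^ 2 = 1)
    (hmem : ∀ x, p (g x) ↔ p x) : (g.subtypePerm hmem) ^ 2 = 1 := by
  ext y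
  show g (g y.1) = y.1
  exact inv_apply_sq h2 _

/-- Involutions fixing everything outside `p` correspond to involutions of `Subtype p`. -/
def fixEquiv {β : Type*} (p : β → Prop) [DecidablePred p] :
    {f : Perm (Subtype p) // f ^ 2 = 1} ≃
      {g : {g : Perm β // g ^ 2 = 1} // ∀ x, ¬ p x → g.1 x = x} where
  toFun f := ⟨⟨ofSubtype f.1, by rw [← map_pow, f.2, map_one]⟩,
    fun x hx => ofSubtype_apply_of_not_mem f.1 hx⟩
  invFun g := by
    refine ⟨g.1.1.subtypePerm (fun x => ⟨fun hx => ?_, fun hx => ?_⟩), subtypePerm_sq g.1.2 _⟩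
    · by_contra hpx
      exact hpx (g.2 x hpx ▸ hx)
    · by_contra hgx
      have h1 : g.1.1 (g.1.1 x) = g.1.1 x := g.2 _ hgx
      rw [inv_apply_sq g.1.2] at h1
      exact hgx (h1 ▸ hx)
  left_inv f := by
    apply Subtype.ext
    apply Equiv.ext
    intro y
    apply Subtype.ext
    simp [Equiv.Perm.subtypePerm_apply]
  right_inv g := by
    apply Subtype.ext
    apply Subtype.ext
    apply Equiv.ext
    intro x
    by_cases hx : p x
    · simp [Equiv.Perm.ofSubtype_apply_of_mem, Equiv.Perm.subtypePerm_apply, hx]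
    · rw [Equiv.Perm.ofSubtype_apply_of_not_mem _ hx, g.2 x hx]


lemma inv_j {β : Type*} {g : Perm β} {a j : β} (h2 : g ^ 2 = 1) (haj : g a = j) :
    g j = a := by rw [← haj, inv_apply_sq h2]

lemma pair_mem {β : Type*} {g : Perm β} {a j : β} (h2 : g ^ 2 = 1) (haj : g a = j) :
    ∀ x, (g x ≠ a ∧ g x ≠ j) ↔ (x ≠ a ∧ x ≠ j) := by
  intro x
  have hgj : g j = a := inv_j h2 haj
  constructor
  · rintro ⟨hga, hgj'⟩
    constructor
    · rintro rfl; exact hgj' haj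
    · rintro rfl; exact hga hgj
  · rintro ⟨hxa, hxj⟩
    constructor
    · intro h; rw [← hgj] at h; exact hxj (g.injective h)
    · intro h; rw [← haj] at h; exact hxa (g.injective h)

/-- Involutions sending `a` to `j ≠ a` correspond to involutions avoiding `a, j`. -/
def pairEquiv {β : Type*} [DecidableEq β] {a j : β} (hja : j ≠ a) :
    {f : Perm {x : β // x ≠ a ∧ x ≠ j} // f ^ 2 = 1} ≃
      {g : Perm β // g ^ 2 = 1 ∧ g a = j} where
  toFun f := by
    have hcomm : Commute (ofSubtype f.1) (Equiv.swap j a) := by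
      apply Equiv.ext
      intro x
      rw [Equiv.Perm.mul_apply, Equiv.Perm.mul_apply]
      rcases eq_or_ne x a with h | hxa
      · rw [h, Equiv.swap_apply_right,
          Equiv.Perm.ofSubtype_apply_of_not_mem f.1 (by simp),
          Equiv.Perm.ofSubtype_apply_of_not_mem f.1 (by simp), Equiv.swap_apply_right]
      rcases eq_or_ne x j with h | hxj
      · rw [h, Equiv.swap_apply_left,
          Equiv.Perm.ofSubtype_apply_of_not_mem f.1 (by simp [hja]),
          Equiv.Perm.ofSubtype_apply_of_not_mem f.1 (by simp [hja]), Equiv.swap_apply_left]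
      · rw [Equiv.swap_apply_of_ne_of_ne hxj hxa,
          Equiv.Perm.ofSubtype_apply_of_mem f.1 (show x ≠ a ∧ x ≠ j from ⟨hxa, hxj⟩),
          Equiv.swap_apply_of_ne_of_ne (f.1 ⟨x, ⟨hxa, hxj⟩⟩).2.2 (f.1 ⟨x, ⟨hxa, hxj⟩⟩).2.1]
    refine ⟨ofSubtype f.1 * Equiv.swap j a, ?_, ?_⟩
    · rw [hcomm.mul_pow, ← map_pow, f.2, map_one, one_mul, sq, Equiv.swap_mul_self]
    · rw [Equiv.Perm.mul_apply, Equiv.swap_apply_right,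
        Equiv.Perm.ofSubtype_apply_of_not_mem f.1 (by simp)]
  invFun g := ⟨g.1.subtypePerm (pair_mem g.2.1 g.2.2), subtypePerm_sq g.2.1 _⟩
  left_inv f := by
    apply Subtype.ext
    apply Equiv.ext
    intro y
    apply Subtype.ext
    have hy : (y : β) ≠ a ∧ (y : β) ≠ j := y.2
    rw [Equiv.Perm.subtypePerm_apply]
    show (ofSubtype f.1 * Equiv.swap j a) (y : β) = _
    rw [Equiv.Perm.mul_apply, Equiv.swap_apply_of_ne_of_ne hy.2 hy.1,
      Equiv.Perm.ofSubtype_apply_of_mem f.1 hy]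
  right_inv g := by
    apply Subtype.ext
    apply Equiv.ext
    intro x
    show (ofSubtype (g.1.subtypePerm (pair_mem g.2.1 g.2.2)) * Equiv.swap j a) x = g.1 x
    rw [Equiv.Perm.mul_apply]
    rcases eq_or_ne x a with h | hxa
    · rw [h, Equiv.swap_apply_right,
        Equiv.Perm.ofSubtype_apply_of_not_mem ((g.1).subtypePerm (pair_mem g.2.1 g.2.2)) (show ¬(j ≠ a ∧ j ≠ j) by simp), g.2.2]
    rcases eq_or_ne x j with h | hxj
    · rw [h, Equiv.swap_apply_left,
        Equiv.Perm.ofSubtype_apply_of_not_mem ((g.1).subtypePerm (pair_mem g.2.1 g.2.2)) (show ¬(a ≠ a ∧ a ≠ j) by simp),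
        inv_j g.2.1 g.2.2]
    · rw [Equiv.swap_apply_of_ne_of_ne hxj hxa,
        Equiv.Perm.ofSubtype_apply_of_mem ((g.1).subtypePerm (pair_mem g.2.1 g.2.2)) (show x ≠ a ∧ x ≠ j from ⟨hxa, hxj⟩),
        Equiv.Perm.subtypePerm_apply]

/-- Flattening of nested subtypes for the moving part. -/
def flatEquiv {β : Type*} {a : β} (j : {x : β // x ≠ a}) :
    {g : {g : {g : Perm β // g ^ 2 = 1} // ¬ g.1 a = a} //
        (⟨g.1.1 a, g.2⟩ : {x : β // x ≠ a}) = j} ≃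
      {g : Perm β // g ^ 2 = 1 ∧ g a = j.1} where
  toFun g := ⟨g.1.1.1, g.1.1.2, congrArg Subtype.val g.2⟩
  invFun g := ⟨⟨⟨g.1, g.2.1⟩, by rw [g.2.2]; exact j.2⟩, Subtype.ext g.2.2⟩
  left_inv g := by apply Subtype.ext; apply Subtype.ext; apply Subtype.ext; rfl
  right_inv g := by apply Subtype.ext; rfl

theorem cd_rec (n : ℕ) : cd (n + 2) = cd (n + 1) + (n + 1) * cd n := by
  classical
  set a : Fin (n + 2) := Fin.last (n + 1) with ha
  have hcompl : Fintype.card {x : Fin (n + 2) // x ≠ a} = n + 1 := by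
    simp [Fintype.card_subtype_compl]
  have key : ∀ j : {x : Fin (n + 2) // x ≠ a},
      Fintype.card {x : Fin (n + 2) // x ≠ a ∧ x ≠ j.1} = n := by
    rintro ⟨j, hja⟩
    have e1 : {x : Fin (n + 2) // x ≠ a ∧ x ≠ j} ≃
        {y : {x : Fin (n + 2) // x ≠ a} // ¬ y = ⟨j, hja⟩} :=
      (Equiv.subtypeSubtypeEquivSubtypeInter (· ≠ a) (· ≠ j)).symm.trans
        (Equiv.subtypeEquivRight (fun y => by
          rw [not_iff_not, Subtype.ext_iff]))
    rw [Fintype.card_congr e1, Fintype.card_subtype_compl, Fintype.card_subtype_eq, hcompl]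
    simp
  have h1 : Nat.card {g : Perm (Fin (n + 2)) // g ^ 2 = 1}
      = Nat.card {g : {g : Perm (Fin (n + 2)) // g ^ 2 = 1} // g.1 a = a}
        + Nat.card {g : {g : Perm (Fin (n + 2)) // g ^ 2 = 1} // ¬ g.1 a = a} := by
    rw [← Nat.card_sum]
    exact (Nat.card_congr
      (Equiv.sumCompl (fun g : {g : Perm (Fin (n + 2)) // g ^ 2 = 1} => g.1 a = a))).symm
  rw [cd, h1]
  congr 1
  · -- fixed part
    have e2 : {g : {g : Perm (Fin (n + 2)) // g ^ 2 = 1} // g.1 a = a} ≃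
        {g : {g : Perm (Fin (n + 2)) // g ^ 2 = 1} // ∀ x, ¬ x ≠ a → g.1 x = x} :=
      Equiv.subtypeEquivRight (fun g => by
        constructor
        · intro h x hx
          rw [not_not.mp hx, h]
        · intro h
          exact h a (by simp))
    rw [Nat.card_congr (e2.trans (fixEquiv (· ≠ a)).symm), card_inv, hcompl]
  · -- moving part
    rw [Nat.card_congr (Equiv.sigmaFiberEquiv
      (fun g : {g : {g : Perm (Fin (n + 2)) // g ^ 2 = 1} // ¬ g.1 a = a} =>
        (⟨g.1.1 a, g.2⟩ : {x : Fin (n + 2) // x ≠ a}))).symm]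
    rw [Nat.card_eq_fintype_card, Fintype.card_sigma]
    have hfib : ∀ j : {x : Fin (n + 2) // x ≠ a},
        Fintype.card {g : {g : {g : Perm (Fin (n + 2)) // g ^ 2 = 1} // ¬ g.1 a = a} //
          (⟨g.1.1 a, g.2⟩ : {x : Fin (n + 2) // x ≠ a}) = j} = cd n := by
      intro j
      rw [← Nat.card_eq_fintype_card,
        Nat.card_congr ((flatEquiv j).trans (pairEquiv j.2).symm), card_inv, key j]
    rw [Finset.sum_congr rfl (fun j _ => hfib j), Finset.sum_const, Finset.card_univ, hcompl,
      smul_eq_mul]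

lemma cd_pos (n : ℕ) : 0 < cd n := by
  induction n using Nat.twoStepInduction with
  | zero => rw [cd_zero]; norm_num
  | one => rw [cd_one]; norm_num
  | more n ih _ => rw [cd_rec]; positivity

lemma cd_mono (n : ℕ) : cd n ≤ cd (n + 1) := by
  cases n with
  | zero => rw [cd_zero, cd_one]
  | succ m => rw [cd_rec]; exact Nat.le_add_right _ _

lemma factorial_le_cd_mul (n : ℕ) : Nat.factorial n ≤ cd (n + 1) * cd n := by
  induction n with
  | zero => simp [cd_zero, cd_one]
  | succ m ih =>
    calc Nat.factorial (m + 1) = (m + 1) * Nat.factorial m := rfl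
    _ ≤ (m + 1) * (cd (m + 1) * cd m) := Nat.mul_le_mul_left _ ih
    _ = cd (m + 1) * ((m + 1) * cd m) := by ring
    _ ≤ cd (m + 1) * cd (m + 2) := Nat.mul_le_mul_left _ (by rw [cd_rec]; exact Nat.le_add_left _ _)
    _ = cd (m + 2) * cd (m + 1) := Nat.mul_comm _ _

lemma factorial_le_cd_sq (n : ℕ) : Nat.factorial n ≤ cd (n + 1) ^ 2 := by
  calc Nat.factorial n ≤ cd (n + 1) * cd n := factorial_le_cd_mul n
  _ ≤ cd (n + 1) * cd (n + 1) := Nat.mul_le_mul_left _ (cd_mono n)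
  _ = cd (n + 1) ^ 2 := (sq _).symm

noncomputable def gg (n : ℕ) : ℝ := n * Real.log n / 2 - n / 2 + 4 * Real.sqrt n

noncomputable def bb (n : ℕ) : ℝ := Real.exp (gg n)

lemma bb_pos (n : ℕ) : 0 < bb n := Real.exp_pos _

lemma sqrt_eq_exp_half (x : ℝ) (hx : 0 < x) : Real.sqrt x = Real.exp (Real.log x / 2) := by
  rw [Real.sqrt_eq_rpow, Real.rpow_def_of_pos hx]
  ring_nf

set_option maxHeartbeats 1000000 in
lemma bb_rec (n : ℕ) (hn : 23 ≤ n) :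
    bb (n + 1) + ((n : ℝ) + 1) * bb n ≤ bb (n + 2) := by
  have hn1 : (1 : ℝ) ≤ (n : ℝ) := by exact_mod_cast Nat.one_le_iff_ne_zero.mpr (by omega)
  set s : ℝ := Real.sqrt ((n : ℝ) + 2) with hsdef
  have hs2 : s ^ 2 = (n : ℝ) + 2 := Real.sq_sqrt (by linarith)
  have hs5 : 5 ≤ s := by
    have h25 : (25 : ℝ) ≤ (n : ℝ) + 2 := by
      have : (23 : ℝ) ≤ (n : ℝ) := by exact_mod_cast hn
      linarith
    calc (5 : ℝ) = Real.sqrt 25 := by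
          rw [show (25 : ℝ) = 5 ^ 2 by norm_num, Real.sqrt_sq (by norm_num)]
    _ ≤ s := Real.sqrt_le_sqrt h25
  have hs0 : 0 < s := by linarith
  have hd0 : 0 < (n : ℝ) + 4 * s := by linarith
  have hcast1 : ((n : ℕ) + 1 : ℕ) = ((n : ℝ) + 1) := by push_cast; ring
  -- Part 1 : bb (n+1) ≤ bb (n+2) * (exp (1/2) / s)
  have part1 : bb (n + 1) ≤ bb (n + 2) * (Real.exp (1 / 2) / s) := by
    have hseq : s = Real.exp (Real.log ((n : ℝ) + 2) / 2) := sqrt_eq_exp_half _ (by linarith)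
    rw [bb, bb, hseq, ← Real.exp_sub, ← Real.exp_add, Real.exp_le_exp]
    have hlog : Real.log ((n : ℝ) + 1) ≤ Real.log ((n : ℝ) + 2) :=
      Real.log_le_log (by linarith) (by linarith)
    have hsq : Real.sqrt ((n : ℝ) + 1) ≤ Real.sqrt ((n : ℝ) + 2) := Real.sqrt_le_sqrt (by linarith)
    have hmul : ((n : ℝ) + 1) * Real.log ((n : ℝ) + 1) ≤ ((n : ℝ) + 1) * Real.log ((n : ℝ) + 2) :=
      mul_le_mul_of_nonneg_left hlog (by linarith)
    rw [gg, gg]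
    push_cast
    rw [← hsdef]
    nlinarith [hsq]
  -- Part 2 : (n+1) * bb n ≤ bb (n+2) * ((n+1)/(n+4s))
  have part2 : ((n : ℝ) + 1) * bb n ≤ bb (n + 2) * (((n : ℝ) + 1) / ((n : ℝ) + 4 * s)) := by
    have hexp : ((n : ℝ) + 4 * s) ≤ Real.exp (gg (n + 2) - gg n) := by
      have hstep : Real.log ((n : ℝ) + 2) - 2 / ((n : ℝ) + 2) + 4 / s ≤ gg (n + 2) - gg n := by
        have f1 : Real.log (n : ℝ) ≤ Real.log ((n : ℝ) + 2) - 2 / ((n : ℝ) + 2) := by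
          have h0 : (0 : ℝ) < (n : ℝ) / ((n : ℝ) + 2) := by positivity
          have := Real.log_le_sub_one_of_pos h0
          rw [Real.log_div (by linarith) (by linarith)] at this
          have harith : (n : ℝ) / ((n : ℝ) + 2) - 1 = -(2 / ((n : ℝ) + 2)) := by
            field_simp
            ring
          linarith [this, harith ▸ this]
        have f2 : 1 / s ≤ s - Real.sqrt (n : ℝ) := by
          have hsn : Real.sqrt (n : ℝ) ≤ s := Real.sqrt_le_sqrt (by linarith)
          have hsn0 : 0 ≤ Real.sqrt (n : ℝ) := Real.sqrt_nonneg _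
          have hdiff : (s - Real.sqrt (n : ℝ)) * (s + Real.sqrt (n : ℝ)) = 2 := by
            have hn2 : Real.sqrt (n : ℝ) ^ 2 = (n : ℝ) := Real.sq_sqrt (by linarith)
            nlinarith [hs2, hn2]
          rw [div_le_iff₀ hs0]
          nlinarith [hdiff, hsn, hs0, sq_nonneg (s - Real.sqrt (n : ℝ))]
        have hmono : (n : ℝ) * Real.log (n : ℝ) ≤
            (n : ℝ) * (Real.log ((n : ℝ) + 2) - 2 / ((n : ℝ) + 2)) :=
          mul_le_mul_of_nonneg_left f1 (by linarith)
        rw [gg, gg]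
        push_cast
        rw [← hsdef]
        have harith2 : (n : ℝ) * (2 / ((n : ℝ) + 2)) = 2 - 4 / ((n : ℝ) + 2) := by
          field_simp; ring
        have hfrac : 4 / ((n : ℝ) + 2) ≥ 0 := by positivity
        have hmono' : (n : ℝ) * Real.log (n : ℝ)
            ≤ (n : ℝ) * Real.log ((n : ℝ) + 2) - 2 + 4 / ((n : ℝ) + 2) := by
          nlinarith [hmono, harith2]
        simp only [div_eq_mul_inv] at f2 hmono' ⊢
        linarith [f2, hmono']
      calc ((n : ℝ) + 4 * s) ≤ ((n : ℝ) + 2) * (1 + (4 / s - 2 / ((n : ℝ) + 2))) := by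
            have hexpand : ((n : ℝ) + 2) * (1 + (4 / s - 2 / ((n : ℝ) + 2)))
                = (n : ℝ) + 4 * (((n : ℝ) + 2) / s) := by
              field_simp
              ring
            rw [hexpand]
            have : ((n : ℝ) + 2) / s = s := by
              rw [← hs2]; field_simp
            rw [this]
      _ ≤ ((n : ℝ) + 2) * Real.exp (4 / s - 2 / ((n : ℝ) + 2)) := by
            apply mul_le_mul_of_nonneg_left _ (by linarith)
            have := Real.add_one_le_exp (4 / s - 2 / ((n : ℝ) + 2))
            linarith
      _ = Real.exp (Real.log ((n : ℝ) + 2) - 2 / ((n : ℝ) + 2) + 4 / s) := by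
            have hre : Real.log ((n : ℝ) + 2) - 2 / ((n : ℝ) + 2) + 4 / s
                = Real.log ((n : ℝ) + 2) + (4 / s - 2 / ((n : ℝ) + 2)) := by ring
            rw [hre, Real.exp_add, Real.exp_log (show (0:ℝ) < (n : ℝ) + 2 by linarith)]
      _ ≤ Real.exp (gg (n + 2) - gg n) := Real.exp_le_exp.mpr hstep
    have hb : bb (n + 2) = bb n * Real.exp (gg (n + 2) - gg n) := by
      rw [bb, bb, ← Real.exp_add]; ring_nf
    have hQpos : (0:ℝ) ≤ ((n : ℝ) + 1) / ((n : ℝ) + 4 * s) := by positivity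
    have hEQ : ((n : ℝ) + 1)
        ≤ Real.exp (gg (n + 2) - gg n) * (((n : ℝ) + 1) / ((n : ℝ) + 4 * s)) := by
      have h1 : ((n : ℝ) + 4 * s) * (((n : ℝ) + 1) / ((n : ℝ) + 4 * s)) = (n : ℝ) + 1 := by
        field_simp
      nlinarith [mul_le_mul_of_nonneg_right hexp hQpos]
    calc ((n : ℝ) + 1) * bb n
        ≤ (Real.exp (gg (n + 2) - gg n) * (((n : ℝ) + 1) / ((n : ℝ) + 4 * s))) * bb n :=
          mul_le_mul_of_nonneg_right hEQ (le_of_lt (bb_pos n))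
    _ = bb (n + 2) * (((n : ℝ) + 1) / ((n : ℝ) + 4 * s)) := by rw [hb]; ring
  -- Part 3
  have hexph : Real.exp (1 / 2) ≤ 5 / 3 := by
    have h1 : Real.exp (1 / 2) * Real.exp (1 / 2) = Real.exp 1 := by
      rw [← Real.exp_add]; norm_num
    have h2 : Real.exp 1 < 2.7182818286 := Real.exp_one_lt_d9
    nlinarith [Real.exp_pos (1 / 2)]
  have part3 : Real.exp (1 / 2) / s + ((n : ℝ) + 1) / ((n : ℝ) + 4 * s) ≤ 1 := by
    have h1 : Real.exp (1 / 2) / s ≤ (5 / 3) / s := by gcongr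
    have h2 : (5 / 3 : ℝ) / s + ((n : ℝ) + 1) / ((n : ℝ) + 4 * s) ≤ 1 := by
      rw [div_add_div _ _ (ne_of_gt hs0) (ne_of_gt hd0), div_le_one (by positivity)]
      nlinarith [hs2, hs5, sq_nonneg (s - 5)]
    linarith
  calc bb (n + 1) + ((n : ℝ) + 1) * bb n
      ≤ bb (n + 2) * (Real.exp (1 / 2) / s) + bb (n + 2) * (((n : ℝ) + 1) / ((n : ℝ) + 4 * s)) := by
        linarith
  _ = bb (n + 2) * (Real.exp (1 / 2) / s + ((n : ℝ) + 1) / ((n : ℝ) + 4 * s)) := by ring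
  _ ≤ bb (n + 2) * 1 := mul_le_mul_of_nonneg_left part3 (le_of_lt (bb_pos _))
  _ = bb (n + 2) := mul_one _

lemma cd_le_bb : ∃ A : ℝ, 1 ≤ A ∧ ∀ n, (cd n : ℝ) ≤ A * bb n := by
  refine ⟨1 + ∑ k ∈ Finset.range 25, (cd k : ℝ) / bb k, ?_, ?_⟩
  · have : (0:ℝ) ≤ ∑ k ∈ Finset.range 25, (cd k : ℝ) / bb k :=
      Finset.sum_nonneg (fun k _ => div_nonneg (Nat.cast_nonneg _) (bb_pos k).le)
    linarith
  · intro n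
    induction n using Nat.strong_induction_on with
    | _ n ih =>
      rcases lt_or_ge n 25 with h25 | h25
      · have hterm : (cd n : ℝ) / bb n ≤ ∑ k ∈ Finset.range 25, (cd k : ℝ) / bb k :=
          Finset.single_le_sum (f := fun k => (cd k : ℝ) / bb k)
            (fun k _ => div_nonneg (Nat.cast_nonneg _) (bb_pos k).le) (Finset.mem_range.mpr h25)
        rw [← div_le_iff₀ (bb_pos n)] at *
        linarith
      · obtain ⟨m, rfl⟩ : ∃ m, n = m + 2 := ⟨n - 2, by omega⟩
        have hm : 23 ≤ m := by omega
        have h1 := ih (m + 1) (by omega)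
        have h2 := ih m (by omega)
        have hA : (0:ℝ) ≤ 1 + ∑ k ∈ Finset.range 25, (cd k : ℝ) / bb k := by
          have : (0:ℝ) ≤ ∑ k ∈ Finset.range 25, (cd k : ℝ) / bb k :=
            Finset.sum_nonneg (fun k _ => div_nonneg (Nat.cast_nonneg _) (bb_pos k).le)
          linarith
        have hrec := bb_rec m hm
        have hcast : (cd (m + 2) : ℝ) = (cd (m + 1) : ℝ) + ((m : ℝ) + 1) * (cd m : ℝ) := by
          rw [cd_rec]; push_cast; ring
        rw [hcast]
        have hm1 : ((m : ℝ) + 1) * (cd m : ℝ)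
            ≤ (1 + ∑ k ∈ Finset.range 25, (cd k : ℝ) / bb k) * (((m : ℝ) + 1) * bb m) := by
          have := mul_le_mul_of_nonneg_left h2 (show (0:ℝ) ≤ (m : ℝ) + 1 by positivity)
          nlinarith [this, hA]
        nlinarith [h1, hm1, mul_le_mul_of_nonneg_left hrec hA]

lemma log_factorial_lower (m : ℕ) :
    (m : ℝ) * Real.log m - m ≤ Real.log (Nat.factorial m) := by
  rcases Nat.eq_zero_or_pos m with rfl | hm
  · simp
  have hmR : (0:ℝ) < m := by exact_mod_cast hm
  have hfacR : (0:ℝ) < (Nat.factorial m : ℝ) := by exact_mod_cast Nat.factorial_pos m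
  have hterm : (m : ℝ) ^ m / (Nat.factorial m : ℝ) ≤ Real.exp m := by
    have hsum := Real.sum_le_exp_of_nonneg (x := (m : ℝ)) hmR.le (m + 1)
    have hsingle : (m : ℝ) ^ m / (Nat.factorial m : ℝ)
        ≤ ∑ i ∈ Finset.range (m + 1), (m : ℝ) ^ i / (Nat.factorial i : ℝ) := by
      apply Finset.single_le_sum (f := fun i => (m : ℝ) ^ i / (Nat.factorial i : ℝ))
        (fun i _ => by positivity) (Finset.self_mem_range_succ m)
    exact hsingle.trans hsum
  have hpow : (m : ℝ) ^ m ≤ Real.exp m * Nat.factorial m := by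
    rw [div_le_iff₀ hfacR] at hterm; linarith
  have hlog := Real.log_le_log (by positivity) hpow
  rw [Real.log_pow, Real.log_mul (Real.exp_ne_zero _) (ne_of_gt hfacR), Real.log_exp] at hlog
  linarith

lemma two_log_cd_lower (n : ℕ) (hn : 1 ≤ n) :
    ((n : ℝ) - 1) * Real.log ((n : ℝ) - 1) - ((n : ℝ) - 1) ≤ 2 * Real.log (cd n) := by
  obtain ⟨m, rfl⟩ : ∃ m, n = m + 1 := ⟨n - 1, by omega⟩
  have hfac : (Nat.factorial m : ℝ) ≤ ((cd (m + 1) : ℝ)) ^ 2 := by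
    exact_mod_cast factorial_le_cd_sq m
  have hcd : (0:ℝ) < (cd (m + 1) : ℝ) := by exact_mod_cast cd_pos (m + 1)
  have h1 : Real.log (Nat.factorial m) ≤ 2 * Real.log (cd (m + 1)) := by
    have := Real.log_le_log (by exact_mod_cast Nat.factorial_pos m) hfac
    rwa [Real.log_pow] at this
  have h2 := log_factorial_lower m
  have hcast : ((m + 1 : ℕ) : ℝ) - 1 = (m : ℝ) := by push_cast; ring
  rw [hcast]
  linarith

lemma sqrt_nat_tendsto : Tendsto (fun n : ℕ => Real.sqrt n) atTop atTop := by
  apply Filter.tendsto_atTop_atTop.mpr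
  intro b
  refine ⟨Nat.ceil (b ^ 2), fun n hn => ?_⟩
  have h1 : (b ^ 2 : ℝ) ≤ n := le_trans (Nat.le_ceil _) (by exact_mod_cast hn)
  calc b ≤ |b| := le_abs_self b
  _ = Real.sqrt (b ^ 2) := (Real.sqrt_sq_eq_abs b).symm
  _ ≤ Real.sqrt n := Real.sqrt_le_sqrt h1

/-- The involution numbers satisfy `cd(n)^(1/n) / √n → 1/√e = exp(-1/2)` as `n → ∞`. -/
theorem cd_root_asymptotics :
    Tendsto (fun n : ℕ => ((cd n : ℝ)) ^ (1 / (n : ℝ)) / Real.sqrt n) atTop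
      (nhds (Real.exp (-(1 / 2)))) := by
  obtain ⟨A, hA1, hA⟩ := cd_le_bb
  have hA0 : (0:ℝ) < A := lt_of_lt_of_le one_pos hA1
  have hcdpos : ∀ n : ℕ, (0:ℝ) < (cd n : ℝ) := fun n => by exact_mod_cast cd_pos n
  set u : ℕ → ℝ := fun n => Real.log (cd n) / n - Real.log n / 2 with hu_def
  -- upper bound
  have hupper : ∀ n : ℕ, 1 ≤ n → u n ≤ Real.log A / n + 4 / Real.sqrt n - 1 / 2 := by
    intro n hn
    have hnpos : (0:ℝ) < n := by exact_mod_cast hn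
    have hsq : Real.sqrt n * Real.sqrt n = (n : ℝ) := Real.mul_self_sqrt hnpos.le
    have hsq0 : (0:ℝ) < Real.sqrt n := Real.sqrt_pos.mpr hnpos
    have hlog : Real.log (cd n) ≤ Real.log A + gg n := by
      have h2 : Real.log (cd n) ≤ Real.log (A * bb n) := Real.log_le_log (hcdpos n) (hA n)
      rwa [Real.log_mul (ne_of_gt hA0) (ne_of_gt (bb_pos n)), bb, Real.log_exp] at h2
    have hE : (Real.log A + gg n) / n - Real.log n / 2
        = Real.log A / n + 4 / Real.sqrt n - 1 / 2 := by
      rw [gg]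
      field_simp
      ring_nf
      nlinarith [hsq, Real.sq_sqrt hnpos.le]
    have hdiv : Real.log (cd n) / n ≤ (Real.log A + gg n) / n :=
      div_le_div_of_nonneg_right hlog hnpos.le
    simp only [hu_def]
    linarith [hdiv, hE.symm.le, hE.le]
  -- lower bound
  have hlower : ∀ n : ℕ, 2 ≤ n →
      (((n : ℝ) - 1) * Real.log ((n : ℝ) - 1) - ((n : ℝ) - 1)) / (2 * n) - Real.log n / 2
        ≤ u n := by
    intro n hn
    have hnpos : (0:ℝ) < n := by exact_mod_cast (by omega : 0 < n)
    have h1 := two_log_cd_lower n (by omega)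
    have h2 : (((n : ℝ) - 1) * Real.log ((n : ℝ) - 1) - ((n : ℝ) - 1)) / (2 * n)
        ≤ (2 * Real.log (cd n)) / (2 * n) :=
      div_le_div_of_nonneg_right h1 (by positivity)
    have h3 : (2 * Real.log (cd n)) / (2 * n) = Real.log (cd n) / n := by
      rw [mul_div_mul_left _ _ (two_ne_zero)]
    simp only [hu_def]
    linarith [h2, h3.le, h3.symm.le]
  -- limit of upper bound
  have hv : Tendsto (fun n : ℕ => Real.log A / n + 4 / Real.sqrt n - 1 / 2) atTop
      (nhds (-(1 / 2))) := by
    have s1 := tendsto_const_div_atTop_nhds_zero_nat (Real.log A)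
    have s2 : Tendsto (fun n : ℕ => 4 / Real.sqrt n) atTop (nhds 0) :=
      Tendsto.div_atTop tendsto_const_nhds sqrt_nat_tendsto
    have := (s1.add s2).sub_const (1 / 2)
    simpa using this
  -- limit of lower bound
  have hW : Tendsto (fun n : ℕ =>
      (1 / 2) * ((1 - 1 / (n : ℝ)) * Real.log (1 - 1 / (n : ℝ))
        - Real.log n / n - (1 - 1 / (n : ℝ)))) atTop (nhds (-(1 / 2))) := by
    have t1 : Tendsto (fun n : ℕ => 1 - 1 / (n : ℝ)) atTop (nhds 1) := by
      have := tendsto_one_div_atTop_nhds_zero_nat (𝕜 := ℝ)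
      have h := (tendsto_const_nhds (x := (1:ℝ)) (f := atTop (α := ℕ))).sub this
      simpa using h
    have t2 : Tendsto (fun n : ℕ => Real.log (1 - 1 / (n : ℝ))) atTop (nhds 0) := by
      have hcont := (Real.continuousAt_log one_ne_zero).tendsto
      have := hcont.comp t1
      simpa [Function.comp_def] using this
    have t3 := t1.mul t2
    rw [mul_zero] at t3
    have t4 : Tendsto (fun n : ℕ => Real.log n / n) atTop (nhds 0) := by
      have := Real.isLittleO_log_id_atTop.tendsto_div_nhds_zero
      exact this.comp tendsto_natCast_atTop_atTop
    have := ((t3.sub t4).sub t1).const_mul (1 / 2 : ℝ)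
    norm_num at this
    convert this using 2
    norm_num
  -- identify lower bound with W eventually
  have hwW : ∀ n : ℕ, 2 ≤ n →
      (((n : ℝ) - 1) * Real.log ((n : ℝ) - 1) - ((n : ℝ) - 1)) / (2 * n) - Real.log n / 2
        = (1 / 2) * ((1 - 1 / (n : ℝ)) * Real.log (1 - 1 / (n : ℝ))
            - Real.log n / n - (1 - 1 / (n : ℝ))) := by
    intro n hn
    have hnpos : (0:ℝ) < n := by exact_mod_cast (by omega : 0 < n)
    have hn1 : (0:ℝ) < (n : ℝ) - 1 := by
      have : (2:ℝ) ≤ n := by exact_mod_cast hn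
      linarith
    have hlogq : Real.log (1 - 1 / (n : ℝ)) = Real.log ((n : ℝ) - 1) - Real.log n := by
      have hq : 1 - 1 / (n : ℝ) = ((n : ℝ) - 1) / n := by field_simp
      rw [hq, Real.log_div (ne_of_gt hn1) (ne_of_gt hnpos)]
    rw [hlogq]
    field_simp
    ring
  -- squeeze
  have hu : Tendsto u atTop (nhds (-(1 / 2))) := by
    apply tendsto_of_tendsto_of_tendsto_of_le_of_le' hW hv
    · filter_upwards [eventually_ge_atTop 2] with n hn
      rw [← hwW n hn]
      exact hlower n hn
    · filter_upwards [eventually_ge_atTop 1] with n hn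
      exact hupper n hn
  -- conclude
  have hfinal : Tendsto (fun n : ℕ => Real.exp (u n)) atTop (nhds (Real.exp (-(1 / 2)))) :=
    (Real.continuous_exp.tendsto _).comp hu
  apply hfinal.congr'
  filter_upwards [eventually_ge_atTop 1] with n hn
  have hnpos : (0:ℝ) < n := by exact_mod_cast hn
  have hrpow : ((cd n : ℝ)) ^ (1 / (n : ℝ)) = Real.exp (Real.log (cd n) * (1 / n)) :=
    Real.rpow_def_of_pos (hcdpos n) _
  have hsqrt : Real.sqrt n = Real.exp (Real.log n / 2) := sqrt_eq_exp_half _ hnpos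
  rw [hrpow, hsqrt, ← Real.exp_sub]
  congr 1
  simp only [hu_def]
  ring
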